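/- Let X be a real Banach space, let Ω_U ⊆ X be compact, let U ⊆ C(Ω_U, ℝ) be a compact subset of the Banach space of continuous real-valued functions on Ω_U with the supremum norm, let Ω_V ⊆ ℝ^{d_V} be compact, and let G : U → C(Ω_V, ℝ) be continuous. Let σ : ℝ → ℝ be a Tauber–Wiener function. Then for every ε > 0 there exist natural numbers m, n, s, p, points x_1, …, x_m ∈ Ω_U, real numbers c_{k,i}, θ_{k,i}, ξ_{k,i,j} (for 1 ≤ k ≤ p, 1 ≤ i ≤ n, 1 ≤ j ≤ m), and real numbers a_{k,l}, ζ_{k,l} and vectors ω_{k,l} ∈ ℝ^{d_V} (for 1 ≤ k ≤ p, 1 ≤ l ≤ s), such that for all u ∈ U and all y ∈ Ω_V, | G(u)(y) − Σ_{k=1}^{p} ( Σ_{i=1}^{n} c_{k,i} σ( Σ_{j=1}^{m} ξ_{k,i,j} u(x_j) + θ_{k,i} ) ) · ( Σ_{l=1}^{s} a_{k,l} σ( ω_{k,l} · y + ζ_{k,l} ) ) | < ε. -/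

import Mathlib

/-- A function `σ : ℝ → ℝ` is a Tauber–Wiener function if on every interval `[a, b]`,
every continuous function can be uniformly approximated to arbitrary accuracy by
linear combinations `x ↦ ∑ i, c i * σ (w i * x + θ i)`. -/
def TauberWiener (σ : ℝ → ℝ) : Prop :=
  ∀ (a b : ℝ) (f : C(Set.Icc a b, ℝ)) (ε : ℝ), 0 < ε →
    ∃ (n : ℕ) (c w θ : Fin n → ℝ),
      ∀ x : Set.Icc a b, |f x - ∑ i, c i * σ (w i * (x : ℝ) + θ i)| < ε


private lemma pad_collapse {N nk : ℕ} (h : nk ≤ N) (F : Fin N → ℝ) (F' : Fin nk → ℝ)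
    (G : ℕ → ℝ) (hFG : ∀ i : Fin N, F i = G ↑i) (hF'G : ∀ i : Fin nk, F' i = G ↑i)
    (hG0 : ∀ i, nk ≤ i → G i = 0) :
    ∑ i, F i = ∑ i, F' i := by
  calc ∑ i : Fin N, F i = ∑ i : Fin N, G ↑i := Finset.sum_congr rfl fun i _ => hFG i
    _ = ∑ i ∈ Finset.range N, G i := Fin.sum_univ_eq_sum_range G N
    _ = ∑ i ∈ Finset.range nk, G i := (Finset.sum_subset (Finset.range_subset_range.mpr h)
        (fun i _ hi => hG0 i (by simpa using hi))).symm
    _ = ∑ i : Fin nk, G ↑i := (Fin.sum_univ_eq_sum_range G nk).symm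
    _ = ∑ i : Fin nk, F' i := Finset.sum_congr rfl fun i _ => (hF'G i).symm

private lemma block_sum {α : Type*} {p μ : ℕ} (mk : Fin p → ℕ) (hmk : ∀ k, mk k ≤ μ)
    (X : ∀ k, Fin (mk k) → α) (Ξ : ∀ k, Fin (mk k) → ℝ)
    (xP : Fin p × Fin μ → α) (ξbP : Fin p → Fin p × Fin μ → ℝ)
    (hxP : ∀ (k : Fin p) (i : Fin μ) (h : (i : ℕ) < mk k), xP (k, i) = X k ⟨i, h⟩)
    (hξ0 : ∀ (k : Fin p) (q : Fin p × Fin μ), q.1 ≠ k → ξbP k q = 0)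
    (hξ1 : ∀ (k : Fin p) (i : Fin μ) (h : (i : ℕ) < mk k), ξbP k (k, i) = Ξ k ⟨i, h⟩)
    (hξ2 : ∀ (k : Fin p) (i : Fin μ), ¬ ((i : ℕ) < mk k) → ξbP k (k, i) = 0)
    (u : α → ℝ) (k : Fin p) :
    ∑ q : Fin p × Fin μ, ξbP k q * u (xP q) = ∑ i : Fin (mk k), Ξ k i * u (X k i) := by
  rw [Fintype.sum_prod_type]
  rw [Finset.sum_eq_single k (fun b _ hb => Finset.sum_eq_zero fun i _ => by
        rw [hξ0 k (b, i) hb, zero_mul])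
      (fun hk => absurd (Finset.mem_univ k) hk)]
  exact pad_collapse (hmk k) _ _
    (fun i0 => if h : i0 < mk k then Ξ k ⟨i0, h⟩ * u (X k ⟨i0, h⟩) else 0)
    (fun i => by
      beta_reduce
      by_cases h : (i : ℕ) < mk k
      · rw [hξ1 k i h, hxP k i h, dif_pos h]
      · rw [hξ2 k i h, zero_mul, dif_neg h])
    (fun i => by beta_reduce; rw [dif_pos i.isLt])
    (fun i hi => by beta_reduce; rw [dif_neg (by omega)])


set_option maxHeartbeats 2000000 in
/-- Chen–Chen universal approximation theorem for operators. -/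
theorem chen_chen_operator_approximation
    {X : Type*} [NormedAddCommGroup X] [NormedSpace ℝ X] [CompleteSpace X]
    {dV : ℕ}
    (ΩU : Set X) (hΩU : IsCompact ΩU)
    (ΩV : Set (EuclideanSpace ℝ (Fin dV))) (hΩV : IsCompact ΩV)
    (U : Set C(ΩU, ℝ)) (hU : IsCompact U)
    (G : C(ΩU, ℝ) → C(ΩV, ℝ)) (hG : ContinuousOn G U)
    (σ : ℝ → ℝ) (hσ : TauberWiener σ) :
    ∀ ε : ℝ, 0 < ε →
      ∃ (m n s p : ℕ) (x : Fin m → ΩU)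
        (c θ : Fin p → Fin n → ℝ) (ξ : Fin p → Fin n → Fin m → ℝ)
        (a ζ : Fin p → Fin s → ℝ) (ω : Fin p → Fin s → EuclideanSpace ℝ (Fin dV)),
        ∀ u ∈ U, ∀ y : ΩV,
          |G u y -
            ∑ k : Fin p,
              (∑ i : Fin n, c k i * σ (∑ j : Fin m, ξ k i j * u (x j) + θ k i)) *
              (∑ l : Fin s, a k l *
                σ (∑ j : Fin dV, ω k l j * (y : EuclideanSpace ℝ (Fin dV)) j + ζ k l))| < ε := by
  intro ε hε
  classical
  by_cases hUne : U.Nonempty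
  swap
  · exact ⟨0, 0, 0, 0, Fin.elim0, Fin.elim0, Fin.elim0, Fin.elim0, Fin.elim0, Fin.elim0,
      Fin.elim0, fun u hu y => absurd ⟨u, hu⟩ hUne⟩
  by_cases hVne : ΩV.Nonempty
  swap
  · exact ⟨0, 0, 0, 0, Fin.elim0, Fin.elim0, Fin.elim0, Fin.elim0, Fin.elim0, Fin.elim0,
      Fin.elim0, fun u hu y => absurd ⟨y.1, y.2⟩ hVne⟩
  haveI : CompactSpace ΩU := isCompact_iff_compactSpace.mp hΩU
  haveI : CompactSpace ΩV := isCompact_iff_compactSpace.mp hΩV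
  haveI : CompactSpace ↥U := isCompact_iff_compactSpace.mp hU
  -- the continuous function (u, y) ↦ G u y on the compact space ↥U × ↥ΩV
  have hgc : Continuous fun z : ↥U × ↥ΩV => G (z.1 : C(ΩU, ℝ)) z.2 := by
    have h1 : Continuous fun uu : ↥U => G (uu : C(ΩU, ℝ)) := hG.restrict
    exact continuous_eval.comp ((h1.comp continuous_fst).prodMk continuous_snd)
  set g : C(↥U × ↥ΩV, ℝ) := ⟨fun z => G (z.1 : C(ΩU, ℝ)) z.2, hgc⟩ with hgdef
  -- the set of generator functions
  set Sset : Set C(↥U × ↥ΩV, ℝ) :=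
    {f | ∃ (mm : ℕ) (Xp : Fin mm → ΩU) (Ξp : Fin mm → ℝ) (ωe : EuclideanSpace ℝ (Fin dV)),
      ∀ z : ↥U × ↥ΩV, f z = Real.exp ((∑ j, Ξp j * (z.1 : C(ΩU, ℝ)) (Xp j)) +
        ∑ j, ωe j * (z.2 : EuclideanSpace ℝ (Fin dV)) j)} with hSdef
  -- Sset is a submonoid
  have hone : (1 : C(↥U × ↥ΩV, ℝ)) ∈ Sset := by
    refine ⟨0, Fin.elim0, Fin.elim0, 0, fun z => ?_⟩
    simp
  have hmul : ∀ f f' : C(↥U × ↥ΩV, ℝ), f ∈ Sset → f' ∈ Sset → f * f' ∈ Sset := by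
    rintro f f' ⟨m1, X1, Ξ1, ω1, hf⟩ ⟨m2, X2, Ξ2, ω2, hf'⟩
    refine ⟨m1 + m2, Fin.append X1 X2, Fin.append Ξ1 Ξ2, ω1 + ω2, fun z => ?_⟩
    have e1 : ∑ j : Fin (m1 + m2),
        Fin.append Ξ1 Ξ2 j * (z.1 : C(ΩU, ℝ)) (Fin.append X1 X2 j)
        = (∑ j, Ξ1 j * (z.1 : C(ΩU, ℝ)) (X1 j)) + ∑ j, Ξ2 j * (z.1 : C(ΩU, ℝ)) (X2 j) := by
      rw [Fin.sum_univ_add]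
      congr 1
      · exact Finset.sum_congr rfl fun j _ => by rw [Fin.append_left, Fin.append_left]
      · exact Finset.sum_congr rfl fun j _ => by rw [Fin.append_right, Fin.append_right]
    have e2 : ∑ j, (ω1 + ω2) j * (z.2 : EuclideanSpace ℝ (Fin dV)) j
        = (∑ j, ω1 j * (z.2 : EuclideanSpace ℝ (Fin dV)) j) +
          ∑ j, ω2 j * (z.2 : EuclideanSpace ℝ (Fin dV)) j := by
      rw [← Finset.sum_add_distrib]
      exact Finset.sum_congr rfl fun j _ => by
        rw [PiLp.add_apply, add_mul]
    rw [ContinuousMap.mul_apply, hf z, hf' z, ← Real.exp_add, e1, e2]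
    exact congrArg Real.exp (by ring)
  set Smon : Submonoid C(↥U × ↥ΩV, ℝ) :=
    { carrier := Sset, one_mem' := hone, mul_mem' := fun {a b} ha hb => hmul a b ha hb }
    with hSmon
  -- the subalgebra generated by Sset separates points
  have hsep : (Algebra.adjoin ℝ Sset).SeparatesPoints := by
    intro z1 z2 hne
    by_cases h1 : z1.1 = z2.1
    · have h2 : z1.2 ≠ z2.2 := fun h2 => hne (Prod.ext h1 h2)
      have h3 : (z1.2 : EuclideanSpace ℝ (Fin dV)) ≠ (z2.2 : EuclideanSpace ℝ (Fin dV)) :=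
        fun hc => h2 (Subtype.coe_injective hc)
      have h4 : ∃ j, (z1.2 : EuclideanSpace ℝ (Fin dV)) j ≠ (z2.2 : EuclideanSpace ℝ (Fin dV)) j := by
        by_contra hc
        push_neg at hc
        exact h3 (PiLp.ext hc)
      obtain ⟨j0, hj0⟩ := h4
      have hc : Continuous fun z : ↥U × ↥ΩV => Real.exp ((z.2 : EuclideanSpace ℝ (Fin dV)) j0) := by
        apply Real.continuous_exp.comp
        exact ((EuclideanSpace.proj j0 : EuclideanSpace ℝ (Fin dV) →L[ℝ] ℝ).continuous.comp
          continuous_subtype_val).comp continuous_snd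
      refine ⟨_, ⟨⟨fun z => Real.exp ((z.2 : EuclideanSpace ℝ (Fin dV)) j0), hc⟩,
        ⟨Algebra.subset_adjoin ⟨0, Fin.elim0, Fin.elim0, EuclideanSpace.single j0 1,
          fun z => ?_⟩, rfl⟩⟩, ?_⟩
      · simp [EuclideanSpace.single_apply]
      · exact fun hcon => hj0 (Real.exp_eq_exp.mp hcon)
    · have h3 : (z1.1 : C(ΩU, ℝ)) ≠ (z2.1 : C(ΩU, ℝ)) :=
        fun hc => h1 (Subtype.coe_injective hc)
      have h4 : ∃ xx : ΩU, (z1.1 : C(ΩU, ℝ)) xx ≠ (z2.1 : C(ΩU, ℝ)) xx := by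
        by_contra hc
        push_neg at hc
        exact h3 (ContinuousMap.ext hc)
      obtain ⟨xx, hxx⟩ := h4
      have hc : Continuous fun z : ↥U × ↥ΩV => Real.exp ((z.1 : C(ΩU, ℝ)) xx) := by
        apply Real.continuous_exp.comp
        exact (continuous_eval_const xx).comp
          (continuous_subtype_val.comp continuous_fst)
      refine ⟨_, ⟨⟨fun z => Real.exp ((z.1 : C(ΩU, ℝ)) xx), hc⟩,
        ⟨Algebra.subset_adjoin ⟨1, fun _ => xx, fun _ => 1, 0, fun z => ?_⟩, rfl⟩⟩, ?_⟩
      · simp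
      · exact fun hcon => hxx (Real.exp_eq_exp.mp hcon)
  -- Stone--Weierstrass
  obtain ⟨⟨h, hA⟩, hnear⟩ :=
    ContinuousMap.exists_mem_subalgebra_near_continuousMap_of_separatesPoints
      (Algebra.adjoin ℝ Sset) hsep g (ε / 2) (by positivity)
  have hspan : h ∈ Submodule.span ℝ Sset := by
    have h1 : h ∈ Subalgebra.toSubmodule (Algebra.adjoin ℝ Sset) := hA
    rw [Algebra.adjoin_eq_span] at h1
    have h2 : (Submonoid.closure Sset : Set C(↥U × ↥ΩV, ℝ)) = Sset := by
      rw [show Sset = (Smon : Set C(↥U × ↥ΩV, ℝ)) from rfl, Submonoid.closure_eq]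
    rwa [h2] at h1
  rw [Submodule.mem_span_set'] at hspan
  obtain ⟨p, rr, vv, hsum⟩ := hspan
  -- extract the data of each generator
  have hvdata : ∀ k : Fin p, ∃ (mm : ℕ) (Xp : Fin mm → ΩU) (Ξp : Fin mm → ℝ)
      (ωe : EuclideanSpace ℝ (Fin dV)), ∀ z : ↥U × ↥ΩV,
      (vv k : C(↥U × ↥ΩV, ℝ)) z = Real.exp ((∑ j, Ξp j * (z.1 : C(ΩU, ℝ)) (Xp j)) +
        ∑ j, ωe j * (z.2 : EuclideanSpace ℝ (Fin dV)) j) := fun k => (vv k).2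
  choose mk Xb Ξb ωv hv using hvdata
  -- the linear functionals
  set Lf : Fin p → C(ΩU, ℝ) → ℝ := fun k u' => ∑ j, Ξb k j * u' (Xb k j) with hLf
  set Mf : Fin p → EuclideanSpace ℝ (Fin dV) → ℝ := fun k yv => ∑ j, ωv k j * yv j with hMf
  -- bounds
  have hAex : ∀ k : Fin p, ∃ Ak : ℝ, ∀ u' ∈ U, |Lf k u'| ≤ Ak := by
    intro k
    have hcont : Continuous fun u' : C(ΩU, ℝ) => |Lf k u'| := by
      apply Continuous.abs
      exact continuous_finset_sum _ fun j _ =>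
        continuous_const.mul (continuous_eval_const (Xb k j))
    obtain ⟨u0, _, hmax⟩ := hU.exists_isMaxOn hUne hcont.continuousOn
    exact ⟨|Lf k u0|, fun u' hu' => hmax hu'⟩
  choose Abd hAbd using hAex
  have hBex : ∀ k : Fin p, ∃ Bk : ℝ, ∀ yv ∈ ΩV, |Mf k yv| ≤ Bk := by
    intro k
    have hcont : Continuous fun yv : EuclideanSpace ℝ (Fin dV) => |Mf k yv| := by
      apply Continuous.abs
      exact continuous_finset_sum _ fun j _ =>
        continuous_const.mul (EuclideanSpace.proj j :
          EuclideanSpace ℝ (Fin dV) →L[ℝ] ℝ).continuous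
    obtain ⟨y0, _, hmax⟩ := hΩV.exists_isMaxOn hVne hcont.continuousOn
    exact ⟨|Mf k y0|, fun yv hyv => hmax hyv⟩
  choose Bbd hBbd using hBex
  -- accuracy parameters
  set Cb : Fin p → ℝ := fun k => |rr k| * Real.exp (Abd k) + Real.exp (Bbd k) + 1 with hCb
  have hCpos : ∀ k, 0 < Cb k := fun k => by positivity
  set η : Fin p → ℝ := fun k => min 1 (ε / (2 * (p + 1) * Cb k)) with hη
  have hηpos : ∀ k, 0 < η k := fun k => lt_min one_pos (by positivity)
  -- Tauber--Wiener approximations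
  have hFex : ∀ k : Fin p, ∃ (nn : ℕ) (cc ww tt : Fin nn → ℝ),
      ∀ t : Set.Icc (-(Abd k)) (Abd k),
        |rr k * Real.exp ↑t - ∑ i, cc i * σ (ww i * (t : ℝ) + tt i)| < η k := by
    intro k
    obtain ⟨nn, cc, ww, tt, hh⟩ := hσ (-(Abd k)) (Abd k)
      ⟨fun t => rr k * Real.exp ↑t,
        continuous_const.mul (Real.continuous_exp.comp continuous_subtype_val)⟩
      (η k) (hηpos k)
    exact ⟨nn, cc, ww, tt, fun t => hh t⟩
  choose nk cF wF θF hTW1 using hFex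
  have hHex : ∀ k : Fin p, ∃ (nn : ℕ) (cc ww tt : Fin nn → ℝ),
      ∀ t : Set.Icc (-(Bbd k)) (Bbd k),
        |Real.exp ↑t - ∑ i, cc i * σ (ww i * (t : ℝ) + tt i)| < η k := by
    intro k
    obtain ⟨nn, cc, ww, tt, hh⟩ := hσ (-(Bbd k)) (Bbd k)
      ⟨fun t => Real.exp ↑t, Real.continuous_exp.comp continuous_subtype_val⟩
      (η k) (hηpos k)
    exact ⟨nn, cc, ww, tt, fun t => hh t⟩
  choose sk aH wH ζH hTW2 using hHex
  -- dimensions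
  set μ : ℕ := Finset.univ.sup mk with hμdef
  set n : ℕ := Finset.univ.sup nk with hndef
  set s : ℕ := Finset.univ.sup sk with hsdef
  have hmkμ : ∀ k, mk k ≤ μ := fun k => Finset.le_sup (Finset.mem_univ k)
  have hnkn : ∀ k, nk k ≤ n := fun k => Finset.le_sup (Finset.mem_univ k)
  have hsks : ∀ k, sk k ≤ s := fun k => Finset.le_sup (Finset.mem_univ k)
  have hptne : 0 < μ → Nonempty ΩU := by
    intro hμ
    have hex : ∃ k0, 0 < mk k0 := by
      by_contra hc
      push_neg at hc
      have : μ ≤ 0 := Finset.sup_le fun k _ => hc k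
      omega
    obtain ⟨k0, hk0⟩ := hex
    exact ⟨Xb k0 ⟨0, hk0⟩⟩
  set e : Fin p × Fin μ ≃ Fin (p * μ) := finProdFinEquiv with hedef
  set xP : Fin p × Fin μ → ΩU := fun q =>
    if h : (q.2 : ℕ) < mk q.1 then Xb q.1 ⟨q.2, h⟩ else (hptne q.2.pos).some with hxPdef
  set ξbP : Fin p → Fin p × Fin μ → ℝ := fun k q =>
    if h : q.1 = k ∧ (q.2 : ℕ) < mk k then Ξb k ⟨q.2, h.2⟩ else 0 with hξbPdef
  set xfull : Fin (p * μ) → ΩU := fun j => xP (e.symm j) with hxfulldef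
  set ξb : Fin p → Fin (p * μ) → ℝ := fun k j => ξbP k (e.symm j) with hξbdef
  -- block sum identity
  have hXi : ∀ (k : Fin p) (u' : C(ΩU, ℝ)),
      ∑ j : Fin (p * μ), ξb k j * u' (xfull j) = Lf k u' := by
    intro k u'
    have h1 : ∑ j : Fin (p * μ), ξb k j * u' (xfull j)
        = ∑ q : Fin p × Fin μ, ξbP k q * u' (xP q) := by
      rw [← Equiv.sum_comp e (fun j => ξb k j * u' (xfull j))]
      exact Finset.sum_congr rfl fun q _ => by
        simp only [hξbdef, hxfulldef, Equiv.symm_apply_apply]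
    rw [h1]
    exact block_sum mk hmkμ Xb Ξb xP ξbP
      (fun k i h => by simp only [hxPdef]; rw [dif_pos h])
      (fun k q hq => by simp only [hξbPdef]; rw [dif_neg (fun hc => hq hc.1)])
      (fun k i h => by
        have : ξbP k (k, i) = if h' : (k, i).1 = k ∧ ((k, i).2 : ℕ) < mk k then Ξb k ⟨(k, i).2, h'.2⟩ else 0 := by rw [hξbPdef]
        rw [this, dif_pos (show (k, i).1 = k ∧ ((k, i).2 : ℕ) < mk k from ⟨rfl, h⟩)])
      (fun k i h => by simp only [hξbPdef]; rw [dif_neg (fun hc => h hc.2)])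
      (fun t => u' t) k
  -- final coefficient data
  set cfull : Fin p → Fin n → ℝ := fun k i =>
    if h : (i : ℕ) < nk k then cF k ⟨i, h⟩ else 0 with hcfull
  set θfull : Fin p → Fin n → ℝ := fun k i =>
    if h : (i : ℕ) < nk k then θF k ⟨i, h⟩ else 0 with hθfull
  set ξfull : Fin p → Fin n → Fin (p * μ) → ℝ := fun k i j =>
    (if h : (i : ℕ) < nk k then wF k ⟨i, h⟩ else 0) * ξb k j with hξfull
  set afull : Fin p → Fin s → ℝ := fun k l =>
    if h : (l : ℕ) < sk k then aH k ⟨l, h⟩ else 0 with hafull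
  set ζfull : Fin p → Fin s → ℝ := fun k l =>
    if h : (l : ℕ) < sk k then ζH k ⟨l, h⟩ else 0 with hζfull
  set ωfull : Fin p → Fin s → EuclideanSpace ℝ (Fin dV) := fun k l =>
    (if h : (l : ℕ) < sk k then wH k ⟨l, h⟩ else 0) • ωv k with hωfull
  refine ⟨p * μ, n, s, p, xfull, cfull, θfull, ξfull, afull, ζfull, ωfull, ?_⟩
  intro u hu y
  -- collapse of the padded sums
  have hBstep : ∀ k : Fin p,
      (∑ i : Fin n, cfull k i * σ (∑ j, ξfull k i j * u (xfull j) + θfull k i))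
      = ∑ i : Fin (nk k), cF k i * σ (wF k i * Lf k u + θF k i) := by
    intro k
    refine pad_collapse (hnkn k) _ _
      (fun i0 => if h : i0 < nk k then cF k ⟨i0, h⟩ * σ (wF k ⟨i0, h⟩ * Lf k u + θF k ⟨i0, h⟩)
        else 0) (fun i => ?_) (fun i => ?_) (fun i hi => by beta_reduce; rw [dif_neg (by omega)])
    · beta_reduce
      by_cases h : (i : ℕ) < nk k
      · rw [dif_pos h]
        have hsum2 : ∑ j, ξfull k i j * u (xfull j) = wF k ⟨i, h⟩ * Lf k u := by
          simp only [hξfull]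
          rw [dif_pos h, ← hXi k u, Finset.mul_sum]
          exact Finset.sum_congr rfl fun j _ => by ring
        rw [hsum2]
        simp only [hcfull, hθfull]
        rw [dif_pos h, dif_pos h]
      · rw [dif_neg h]
        simp only [hcfull]
        rw [dif_neg h, zero_mul]
    · beta_reduce
      rw [dif_pos i.isLt]
  have hCstep : ∀ k : Fin p,
      (∑ l : Fin s, afull k l *
        σ (∑ j : Fin dV, ωfull k l j * (y : EuclideanSpace ℝ (Fin dV)) j + ζfull k l))
      = ∑ l : Fin (sk k), aH k l * σ (wH k l * Mf k ↑y + ζH k l) := by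
    intro k
    refine pad_collapse (hsks k) _ _
      (fun l0 => if h : l0 < sk k then aH k ⟨l0, h⟩ * σ (wH k ⟨l0, h⟩ * Mf k ↑y + ζH k ⟨l0, h⟩)
        else 0) (fun l => ?_) (fun l => ?_) (fun l hl => by beta_reduce; rw [dif_neg (by omega)])
    · beta_reduce
      by_cases h : (l : ℕ) < sk k
      · rw [dif_pos h]
        have hsum2 : ∑ j : Fin dV, ωfull k l j * (y : EuclideanSpace ℝ (Fin dV)) j
            = wH k ⟨l, h⟩ * Mf k ↑y := by
          simp only [hωfull]
          rw [dif_pos h, hMf, Finset.mul_sum]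
          exact Finset.sum_congr rfl fun j _ => by
            rw [PiLp.smul_apply, smul_eq_mul]; ring
        rw [hsum2]
        simp only [hafull, hζfull]
        rw [dif_pos h, dif_pos h]
      · rw [dif_neg h]
        simp only [hafull]
        rw [dif_neg h, zero_mul]
    · beta_reduce
      rw [dif_pos l.isLt]
  -- put z := (u, y)
  set z : ↥U × ↥ΩV := (⟨u, hu⟩, y) with hzdef
  have hgz : G u y = g z := rfl
  have hhz : h z = ∑ k, rr k * (vv k : C(↥U × ↥ΩV, ℝ)) z := by
    rw [← hsum, ContinuousMap.coe_sum, Finset.sum_apply]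
    exact Finset.sum_congr rfl fun k _ => by
      rw [ContinuousMap.coe_smul, Pi.smul_apply, smul_eq_mul]
  have hvz : ∀ k, (vv k : C(↥U × ↥ΩV, ℝ)) z = Real.exp (Lf k u + Mf k ↑y) := fun k => hv k z
  -- per-term estimate
  have hperk : ∀ k : Fin p,
      |rr k * (vv k : C(↥U × ↥ΩV, ℝ)) z -
        (∑ i : Fin (nk k), cF k i * σ (wF k i * Lf k u + θF k i)) *
        (∑ l : Fin (sk k), aH k l * σ (wH k l * Mf k ↑y + ζH k l))| ≤ ε / (2 * (p + 1)) := by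
    intro k
    set F : ℝ := ∑ i : Fin (nk k), cF k i * σ (wF k i * Lf k u + θF k i) with hF
    set H : ℝ := ∑ l : Fin (sk k), aH k l * σ (wH k l * Mf k ↑y + ζH k l) with hH
    have hLb := hAbd k u hu
    have hMb := hBbd k ↑y y.2
    have hmem1 : Lf k u ∈ Set.Icc (-(Abd k)) (Abd k) := by
      rw [Set.mem_Icc]
      constructor <;> [linarith [(abs_le.mp hLb).1]; exact (abs_le.mp hLb).2]
    have hmem2 : Mf k ↑y ∈ Set.Icc (-(Bbd k)) (Bbd k) := by
      rw [Set.mem_Icc]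
      constructor <;> [linarith [(abs_le.mp hMb).1]; exact (abs_le.mp hMb).2]
    have h1 : |rr k * Real.exp (Lf k u) - F| < η k := hTW1 k ⟨Lf k u, hmem1⟩
    have h2 : |Real.exp (Mf k ↑y) - H| < η k := hTW2 k ⟨Mf k ↑y, hmem2⟩
    have hη1 : η k ≤ 1 := min_le_left _ _
    have hη2 : η k ≤ ε / (2 * (p + 1) * Cb k) := min_le_right _ _
    have hEM : |Real.exp (Mf k ↑y)| ≤ Real.exp (Bbd k) := by
      rw [abs_of_pos (Real.exp_pos _)]
      exact Real.exp_le_exp.mpr (abs_le.mp hMb).2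
    have hEL : |rr k * Real.exp (Lf k u)| ≤ |rr k| * Real.exp (Abd k) := by
      rw [abs_mul, abs_of_pos (Real.exp_pos _)]
      exact mul_le_mul_of_nonneg_left (Real.exp_le_exp.mpr (abs_le.mp hLb).2) (abs_nonneg _)
    have hFb : |F| ≤ |rr k| * Real.exp (Abd k) + 1 := by
      have h3 : |F| ≤ |rr k * Real.exp (Lf k u)| + |rr k * Real.exp (Lf k u) - F| := by
        have h4 : F = rr k * Real.exp (Lf k u) - (rr k * Real.exp (Lf k u) - F) := by ring
        calc |F| = |rr k * Real.exp (Lf k u) - (rr k * Real.exp (Lf k u) - F)| := by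
              rw [← h4]
          _ ≤ _ := abs_sub _ _
      linarith
    have hsplit : rr k * Real.exp (Lf k u + Mf k ↑y) - F * H
        = (rr k * Real.exp (Lf k u) - F) * Real.exp (Mf k ↑y) + F * (Real.exp (Mf k ↑y) - H) := by
      rw [Real.exp_add]; ring
    have hb1 : |(rr k * Real.exp (Lf k u) - F) * Real.exp (Mf k ↑y)|
        ≤ η k * Real.exp (Bbd k) := by
      rw [abs_mul]
      exact mul_le_mul h1.le hEM (abs_nonneg _) (hηpos k).le
    have hb2 : |F * (Real.exp (Mf k ↑y) - H)| ≤ (|rr k| * Real.exp (Abd k) + 1) * η k := by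
      rw [abs_mul]
      exact mul_le_mul hFb h2.le (abs_nonneg _) (by positivity)
    have hCmul : η k * Cb k ≤ ε / (2 * (p + 1)) := by
      have h5 : η k * Cb k ≤ ε / (2 * (p + 1) * Cb k) * Cb k :=
        mul_le_mul_of_nonneg_right hη2 (hCpos k).le
      have h6 : ε / (2 * ((p : ℝ) + 1) * Cb k) * Cb k = ε / (2 * ((p : ℝ) + 1)) := by
        rw [div_mul_eq_mul_div, mul_div_mul_right _ _ (hCpos k).ne']
      calc η k * Cb k ≤ _ := h5
        _ = _ := h6
    have hid : η k * Real.exp (Bbd k) + (|rr k| * Real.exp (Abd k) + 1) * η k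
        = η k * Cb k := by rw [hCb]; ring
    calc |rr k * (vv k : C(↥U × ↥ΩV, ℝ)) z - F * H|
        = |rr k * Real.exp (Lf k u + Mf k ↑y) - F * H| := by rw [hvz k]
      _ = |(rr k * Real.exp (Lf k u) - F) * Real.exp (Mf k ↑y)
            + F * (Real.exp (Mf k ↑y) - H)| := by rw [hsplit]
      _ ≤ |(rr k * Real.exp (Lf k u) - F) * Real.exp (Mf k ↑y)|
            + |F * (Real.exp (Mf k ↑y) - H)| := abs_add_le _ _
      _ ≤ η k * Real.exp (Bbd k) + (|rr k| * Real.exp (Abd k) + 1) * η k := by linarith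
      _ = η k * Cb k := hid
      _ ≤ ε / (2 * (p + 1)) := hCmul
  -- assemble
  have hrw : (∑ k : Fin p,
      (∑ i : Fin n, cfull k i * σ (∑ j, ξfull k i j * u (xfull j) + θfull k i)) *
      (∑ l : Fin s, afull k l *
        σ (∑ j : Fin dV, ωfull k l j * (y : EuclideanSpace ℝ (Fin dV)) j + ζfull k l)))
      = ∑ k : Fin p,
        (∑ i : Fin (nk k), cF k i * σ (wF k i * Lf k u + θF k i)) *
        (∑ l : Fin (sk k), aH k l * σ (wH k l * Mf k ↑y + ζH k l)) :=
    Finset.sum_congr rfl fun k _ => by rw [hBstep k, hCstep k]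
  have htail : |h z - ∑ k : Fin p,
      (∑ i : Fin (nk k), cF k i * σ (wF k i * Lf k u + θF k i)) *
      (∑ l : Fin (sk k), aH k l * σ (wH k l * Mf k ↑y + ζH k l))|
      ≤ (p : ℝ) * (ε / (2 * (p + 1))) := by
    rw [hhz, ← Finset.sum_sub_distrib]
    calc |∑ k : Fin p, (rr k * (vv k : C(↥U × ↥ΩV, ℝ)) z -
          (∑ i : Fin (nk k), cF k i * σ (wF k i * Lf k u + θF k i)) *
          (∑ l : Fin (sk k), aH k l * σ (wH k l * Mf k ↑y + ζH k l)))|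
        ≤ ∑ k : Fin p, |rr k * (vv k : C(↥U × ↥ΩV, ℝ)) z -
          (∑ i : Fin (nk k), cF k i * σ (wF k i * Lf k u + θF k i)) *
          (∑ l : Fin (sk k), aH k l * σ (wH k l * Mf k ↑y + ζH k l))| :=
          Finset.abs_sum_le_sum_abs _ _
      _ ≤ ∑ _k : Fin p, ε / (2 * (p + 1)) := Finset.sum_le_sum fun k _ => hperk k
      _ = (p : ℝ) * (ε / (2 * (p + 1))) := by
          rw [Finset.sum_const, Finset.card_univ, Fintype.card_fin, nsmul_eq_mul]
  have hgh : |g z - h z| < ε / 2 := by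
    have h1 : |g z - h z| = |(h - g) z| := by
      rw [ContinuousMap.sub_apply, abs_sub_comm]
    rw [h1]
    calc |(h - g) z| = ‖(h - g) z‖ := (Real.norm_eq_abs _).symm
      _ ≤ ‖h - g‖ := ContinuousMap.norm_coe_le_norm _ _
      _ < ε / 2 := hnear
  have hhalf : (p : ℝ) * (ε / (2 * (p + 1))) ≤ ε / 2 := by
    have hkey : (p : ℝ) * (ε / (2 * ((p : ℝ) + 1))) = ε / 2 * ((p : ℝ) / ((p : ℝ) + 1)) := by
      field_simp
    have h2 : (p : ℝ) / ((p : ℝ) + 1) ≤ 1 := by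
      rw [div_le_one (by positivity)]
      linarith
    rw [hkey]
    nlinarith [hε.le]
  rw [hrw, hgz]
  calc |g z - ∑ k : Fin p,
        (∑ i : Fin (nk k), cF k i * σ (wF k i * Lf k u + θF k i)) *
        (∑ l : Fin (sk k), aH k l * σ (wH k l * Mf k ↑y + ζH k l))|
      = |(g z - h z) + (h z - ∑ k : Fin p,
        (∑ i : Fin (nk k), cF k i * σ (wF k i * Lf k u + θF k i)) *
        (∑ l : Fin (sk k), aH k l * σ (wH k l * Mf k ↑y + ζH k l)))| := by rw [sub_add_sub_cancel]
    _ ≤ |g z - h z| + |h z - ∑ k : Fin p,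
        (∑ i : Fin (nk k), cF k i * σ (wF k i * Lf k u + θF k i)) *
        (∑ l : Fin (sk k), aH k l * σ (wH k l * Mf k ↑y + ζH k l))| := abs_add_le _ _
    _ < ε / 2 + ε / 2 := add_lt_add_of_lt_of_le hgh (le_trans htail hhalf)
    _ = ε := by ring
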